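/- Let K be the indicator function of a bounded cube Q ⊂ ℝ^d. Then ∫_{|ξ|>1} |ξ|² |K̂(ξ)|⁴ dξ < ∞. -/

import Mathlib

open MeasureTheory FourierTransform

open scoped Real

private lemma oneD_bound {c d : ℝ} (hcd : c < d) (ξ : ℝ) :
    ‖∫ t : ℝ, Complex.exp (↑(-2 * π * (t * ξ)) * Complex.I) •
        Set.indicator (Set.Icc c d) (fun _ => (1 : ℂ)) t‖ ≤ max (2 * (d - c)) 1 / (1 + |ξ|) := by
  have h1 : ∀ t : ℝ, Complex.exp (↑(-2 * π * (t * ξ)) * Complex.I) •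
      Set.indicator (Set.Icc c d) (fun _ => (1 : ℂ)) t
      = Set.indicator (Set.Icc c d)
          (fun t => Complex.exp (↑(-2 * π * (t * ξ)) * Complex.I)) t := by
    intro t
    by_cases ht : t ∈ Set.Icc c d <;> simp [ht]
  simp only [h1]
  rw [MeasureTheory.integral_indicator measurableSet_Icc]
  have hpos : (0:ℝ) < 1 + |ξ| := by positivity
  rcases le_or_gt |ξ| 1 with hξ | hξ
  · have hb : ‖∫ t in Set.Icc c d, Complex.exp (↑(-2 * π * (t * ξ)) * Complex.I)‖
        ≤ 1 * (volume (Set.Icc c d)).toReal := by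
      apply norm_setIntegral_le_of_norm_le_const
      · simp [Real.volume_Icc]
      · intro t _
        exact le_of_eq (Complex.norm_exp_ofReal_mul_I _)
    rw [Real.volume_Icc, ENNReal.toReal_ofReal (by linarith)] at hb
    rw [le_div_iff₀ hpos]
    calc ‖_‖ * (1 + |ξ|) ≤ (1 * (d - c)) * (1 + |ξ|) := by
          exact mul_le_mul_of_nonneg_right hb (le_of_lt hpos)
      _ ≤ 2 * (d - c) := by nlinarith [abs_nonneg ξ]
      _ ≤ max (2 * (d - c)) 1 := le_max_left _ _
  · have hξ0 : ξ ≠ 0 := by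
      intro h; rw [h] at hξ; simp at hξ; linarith
    have hk : ((↑(-2 * π * ξ) * Complex.I : ℂ)) ≠ 0 := by
      simp [Complex.ext_iff, Real.pi_ne_zero, hξ0]
    have h2 : ∀ t : ℝ, Complex.exp (↑(-2 * π * (t * ξ)) * Complex.I)
        = Complex.exp ((↑(-2 * π * ξ) * Complex.I) * (t:ℂ)) := by
      intro t; congr 1; push_cast; ring
    simp only [h2]
    rw [MeasureTheory.integral_Icc_eq_integral_Ioc,
      ← intervalIntegral.integral_of_le hcd.le,
      integral_exp_mul_complex hk]
    have hnorm : ‖(↑(-2 * π * ξ) * Complex.I : ℂ)‖ = 2 * π * |ξ| := by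
      simp [abs_mul, abs_of_pos Real.pi_pos]
    rw [norm_div, hnorm]
    have hnum : ‖Complex.exp (↑(-2 * π * ξ) * Complex.I * (d:ℂ))
        - Complex.exp (↑(-2 * π * ξ) * Complex.I * (c:ℂ))‖ ≤ 2 := by
      refine (norm_sub_le _ _).trans ?_
      have e1 : ‖Complex.exp (↑(-2 * π * ξ) * Complex.I * (d:ℂ))‖ = 1 := by
        rw [show (↑(-2 * π * ξ) * Complex.I * (d:ℂ)) = ↑(-2 * π * ξ * d) * Complex.I by
          push_cast; ring]
        exact Complex.norm_exp_ofReal_mul_I _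
      have e2 : ‖Complex.exp (↑(-2 * π * ξ) * Complex.I * (c:ℂ))‖ = 1 := by
        rw [show (↑(-2 * π * ξ) * Complex.I * (c:ℂ)) = ↑(-2 * π * ξ * c) * Complex.I by
          push_cast; ring]
        exact Complex.norm_exp_ofReal_mul_I _
      rw [e1, e2]; norm_num
    have hd : (0:ℝ) < 2 * π * |ξ| := by positivity
    calc ‖_ - _‖ / (2 * π * |ξ|) ≤ 2 / (2 * π * |ξ|) := by gcongr
      _ ≤ 1 / (1 + |ξ|) := by
          rw [div_le_div_iff₀ hd hpos]
          nlinarith [Real.pi_gt_three]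
      _ ≤ max (2 * (d - c)) 1 / (1 + |ξ|) := by gcongr; exact le_max_right _ _

private lemma indicator_cube_eq_prod {d : ℕ} (a b : Fin d → ℝ) (v : EuclideanSpace ℝ (Fin d)) :
    Set.indicator {x : EuclideanSpace ℝ (Fin d) | ∀ i, x i ∈ Set.Icc (a i) (b i)}
      (fun _ => (1 : ℂ)) v
      = ∏ i, Set.indicator (Set.Icc (a i) (b i)) (fun _ => (1 : ℂ)) (v i) := by
  by_cases h : ∀ i, v i ∈ Set.Icc (a i) (b i)
  · rw [Set.indicator_of_mem
      (show v ∈ {x : EuclideanSpace ℝ (Fin d) | ∀ i, x i ∈ Set.Icc (a i) (b i)} from h),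
      Finset.prod_congr rfl (fun i _ => Set.indicator_of_mem (h i) _),
      Finset.prod_const_one]
  · push_neg at h
    obtain ⟨i, hi⟩ := h
    rw [Set.indicator_of_notMem
      (fun hh : v ∈ {x : EuclideanSpace ℝ (Fin d) | ∀ i, x i ∈ Set.Icc (a i) (b i)} =>
        hi (hh i)),
      Finset.prod_eq_zero (Finset.mem_univ i) (Set.indicator_of_notMem hi _)]

private lemma fourier_eq_prod {d : ℕ} (a b : Fin d → ℝ) (ξ : EuclideanSpace ℝ (Fin d)) :
    𝓕 (Set.indicator {x : EuclideanSpace ℝ (Fin d) | ∀ i, x i ∈ Set.Icc (a i) (b i)}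
      (fun _ => (1 : ℂ))) ξ
    = ∏ i, ∫ t : ℝ, Complex.exp (↑(-2 * π * (t * ξ i)) * Complex.I) •
        Set.indicator (Set.Icc (a i) (b i)) (fun _ => (1 : ℂ)) t := by
  rw [Real.fourier_eq']
  rw [← ((EuclideanSpace.volume_preserving_symm_measurableEquiv_toLp (Fin d)).symm).integral_comp
    (MeasurableEquiv.measurableEmbedding _)]
  rw [← MeasureTheory.integral_fintype_prod_eq_prod (ι := Fin d)
    (f := fun i (t : ℝ) => Complex.exp (↑(-2 * π * (t * ξ i)) * Complex.I) •
        Set.indicator (Set.Icc (a i) (b i)) (fun _ => (1 : ℂ)) t)]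
  congr 1
  ext x
  have hcoord : ∀ i, (((MeasurableEquiv.toLp 2 (Fin d → ℝ)).symm).symm x) i = x i := by
    intro i
    simp [MeasurableEquiv.coe_toLp, MeasurableEquiv.symm_mk, MeasurableEquiv.coe_mk]
  have hinner : (inner ℝ (((MeasurableEquiv.toLp 2 (Fin d → ℝ)).symm).symm x) ξ : ℝ)
      = ∑ i, x i * ξ i := by
    rw [PiLp.inner_apply]
    simp [RCLike.inner_apply, hcoord, mul_comm]
  rw [hinner, indicator_cube_eq_prod]
  have hexp : Complex.exp (↑(-2 * π * ∑ i, x i * ξ i) * Complex.I)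
      = ∏ i, Complex.exp (↑(-2 * π * (x i * ξ i)) * Complex.I) := by
    rw [← Complex.exp_sum]
    congr 1
    rw [show (-2 * π * ∑ i, x i * ξ i) = ∑ i, -2 * π * (x i * ξ i) by rw [Finset.mul_sum],
      Complex.ofReal_sum, Finset.sum_mul]
  rw [hexp]
  simp only [smul_eq_mul, hcoord]
  rw [← Finset.prod_mul_distrib]

private lemma key2 (t : ℝ) : ((1 + |t|) ^ 4)⁻¹ ≤ ((1:ℝ) + t ^ 2)⁻¹ := by
  have h1 : (0:ℝ) < 1 + t ^ 2 := by positivity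
  refine inv_anti₀ h1 ?_
  nlinarith [abs_nonneg t, sq_abs t, sq_nonneg (1 + |t|), sq_nonneg (|t| * (1 + |t|))]

private lemma key1 (t : ℝ) : t ^ 2 * ((1 + |t|) ^ 4)⁻¹ ≤ ((1:ℝ) + t ^ 2)⁻¹ := by
  have h1 : (0:ℝ) < 1 + t ^ 2 := by positivity
  have h2 : (0:ℝ) < (1 + |t|) ^ 4 := by positivity
  rw [← div_eq_mul_inv, inv_eq_one_div, div_le_div_iff₀ h2 h1]
  nlinarith [abs_nonneg t, sq_abs t, sq_nonneg t, sq_nonneg (t ^ 2),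
    mul_nonneg (abs_nonneg t) (sq_nonneg t), sq_nonneg (|t| + t ^ 2)]


/-- If `K` is the indicator function of a bounded (axis-parallel) cube
`Q ⊂ ℝ^d`, then `∫_{|ξ|>1} |ξ|² |K̂(ξ)|⁴ dξ < ∞`. -/
theorem stmt4 {d : ℕ} (a b : Fin d → ℝ) (hab : ∀ i, a i < b i)
    (K : EuclideanSpace ℝ (Fin d) → ℂ)
    (hK : K = Set.indicator {x : EuclideanSpace ℝ (Fin d) | ∀ i, x i ∈ Set.Icc (a i) (b i)}
      (fun _ => (1 : ℂ))) :
    IntegrableOn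
      (fun ξ : EuclideanSpace ℝ (Fin d) => ‖ξ‖ ^ 2 * ‖𝓕 K ξ‖ ^ 4)
      {ξ : EuclideanSpace ℝ (Fin d) | 1 < ‖ξ‖} volume := by
  set C : Fin d → ℝ := fun i => max (2 * (b i - a i)) 1 with hCdef
  -- the cube is measurable with finite volume
  have hSeq : {x : EuclideanSpace ℝ (Fin d) | ∀ i, x i ∈ Set.Icc (a i) (b i)} =
      ((MeasurableEquiv.toLp 2 (Fin d → ℝ)).symm) ⁻¹'
        (Set.univ.pi fun i => Set.Icc (a i) (b i)) := by
    ext x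
    simp only [Set.mem_setOf_eq, Set.mem_preimage, Set.mem_univ_pi]
    exact Iff.rfl
  have hSmeas : MeasurableSet
      {x : EuclideanSpace ℝ (Fin d) | ∀ i, x i ∈ Set.Icc (a i) (b i)} := by
    rw [hSeq]
    exact ((MeasurableEquiv.toLp 2 (Fin d → ℝ)).symm).measurable
      (MeasurableSet.univ_pi fun i => measurableSet_Icc)
  have hvol : volume {x : EuclideanSpace ℝ (Fin d) | ∀ i, x i ∈ Set.Icc (a i) (b i)} < ⊤ := by
    rw [hSeq, (EuclideanSpace.volume_preserving_symm_measurableEquiv_toLp (Fin d)).measure_preimage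
      ((MeasurableSet.univ_pi fun i => measurableSet_Icc).nullMeasurableSet)]
    rw [volume_pi_pi]
    simp only [Real.volume_Icc]
    exact ENNReal.prod_lt_top (fun i _ => ENNReal.ofReal_lt_top)
  have hKint : Integrable K := by
    rw [hK, integrable_indicator_iff hSmeas]
    exact integrableOn_const hvol.ne
  -- continuity of the Fourier transform
  have hc : Continuous (𝓕 K) :=
    VectorFourier.fourierIntegral_continuous Real.continuous_fourierChar
      (by exact continuous_inner) hKint
  -- norm squared on Euclidean space
  have hns : ∀ ξ : EuclideanSpace ℝ (Fin d), ‖ξ‖ ^ 2 = ∑ i, (ξ i) ^ 2 := by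
    intro ξ
    rw [EuclideanSpace.norm_eq, Real.sq_sqrt (by positivity)]
    simp [sq_abs]
  -- pointwise bound on the Fourier transform
  have hF : ∀ ξ : EuclideanSpace ℝ (Fin d), ‖𝓕 K ξ‖ ≤ ∏ i, C i / (1 + |ξ i|) := by
    intro ξ
    rw [hK, fourier_eq_prod, norm_prod]
    exact Finset.prod_le_prod (fun i _ => norm_nonneg _)
      (fun i _ => oneD_bound (hab i) (ξ i))
  -- pointwise bound on the full integrand
  have hpt : ∀ ξ : EuclideanSpace ℝ (Fin d),
      ‖ξ‖ ^ 2 * ‖𝓕 K ξ‖ ^ 4 ≤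
        ((d : ℝ) * ∏ i, (C i) ^ 4) * ∏ i, ((1:ℝ) + (ξ i) ^ 2)⁻¹ := by
    intro ξ
    have hF4 : ‖𝓕 K ξ‖ ^ 4 ≤ ∏ i, (C i / (1 + |ξ i|)) ^ 4 := by
      rw [Finset.prod_pow]
      exact pow_le_pow_left₀ (norm_nonneg _) (hF ξ) 4
    have per_i : ∀ i : Fin d, (ξ i) ^ 2 * ∏ j, (C j / (1 + |ξ j|)) ^ 4 ≤
        (∏ j, (C j) ^ 4) * ∏ j, ((1:ℝ) + (ξ j) ^ 2)⁻¹ := by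
      intro i
      have hstep : (ξ i) ^ 2 * ∏ j, ((1 + |ξ j|) ^ 4)⁻¹ ≤ ∏ j, ((1:ℝ) + (ξ j) ^ 2)⁻¹ := by
        rw [← Finset.mul_prod_erase Finset.univ (fun j => ((1 + |ξ j|) ^ 4)⁻¹)
            (Finset.mem_univ i),
          ← Finset.mul_prod_erase Finset.univ (fun j => ((1:ℝ) + (ξ j) ^ 2)⁻¹)
            (Finset.mem_univ i), ← mul_assoc]
        refine mul_le_mul (key1 (ξ i)) (Finset.prod_le_prod (fun j _ => by positivity)
          (fun j _ => key2 (ξ j))) (Finset.prod_nonneg (fun j _ => by positivity))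
          (by positivity)
      calc (ξ i) ^ 2 * ∏ j, (C j / (1 + |ξ j|)) ^ 4
          = (∏ j, (C j) ^ 4) * ((ξ i) ^ 2 * ∏ j, ((1 + |ξ j|) ^ 4)⁻¹) := by
            simp only [div_pow]
            rw [Finset.prod_div_distrib, div_eq_mul_inv, ← Finset.prod_inv_distrib]
            ring
        _ ≤ (∏ j, (C j) ^ 4) * ∏ j, ((1:ℝ) + (ξ j) ^ 2)⁻¹ := by
            refine mul_le_mul_of_nonneg_left hstep (Finset.prod_nonneg (fun j _ => by positivity))
    calc ‖ξ‖ ^ 2 * ‖𝓕 K ξ‖ ^ 4 ≤ (∑ i, (ξ i) ^ 2) * ∏ i, (C i / (1 + |ξ i|)) ^ 4 := by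
          rw [hns ξ]
          exact mul_le_mul_of_nonneg_left hF4 (Finset.sum_nonneg (fun i _ => by positivity))
      _ = ∑ i, (ξ i) ^ 2 * ∏ j, (C j / (1 + |ξ j|)) ^ 4 := Finset.sum_mul _ _ _
      _ ≤ ∑ _i : Fin d, (∏ j, (C j) ^ 4) * ∏ j, ((1:ℝ) + (ξ j) ^ 2)⁻¹ :=
          Finset.sum_le_sum (fun i _ => per_i i)
      _ = ((d : ℝ) * ∏ i, (C i) ^ 4) * ∏ i, ((1:ℝ) + (ξ i) ^ 2)⁻¹ := by
          rw [Finset.sum_const, Finset.card_univ, Fintype.card_fin, nsmul_eq_mul]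
          ring
  -- integrability of the majorant
  have hprod : Integrable (fun x : Fin d → ℝ => ∏ i, ((1:ℝ) + (x i) ^ 2)⁻¹) :=
    Integrable.fintype_prod (fun _ => integrable_inv_one_add_sq)
  have hG : Integrable (fun ξ : EuclideanSpace ℝ (Fin d) => ∏ i, ((1:ℝ) + (ξ i) ^ 2)⁻¹) := by
    rw [← ((EuclideanSpace.volume_preserving_symm_measurableEquiv_toLp (Fin d)).symm).integrable_comp_emb
      (MeasurableEquiv.measurableEmbedding _)]
    have : (fun ξ : EuclideanSpace ℝ (Fin d) => ∏ i, ((1:ℝ) + (ξ i) ^ 2)⁻¹) ∘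
        ((MeasurableEquiv.toLp 2 (Fin d → ℝ)).symm).symm
        = fun x : Fin d → ℝ => ∏ i, ((1:ℝ) + (x i) ^ 2)⁻¹ := by
      ext x
      simp [Function.comp, MeasurableEquiv.coe_toLp]
    rw [this]
    exact hprod
  have hg_int : Integrable (fun ξ : EuclideanSpace ℝ (Fin d) =>
      ((d : ℝ) * ∏ i, (C i) ^ 4) * ∏ i, ((1:ℝ) + (ξ i) ^ 2)⁻¹) := hG.const_mul _
  refine (hg_int.mono' ?_ ?_).integrableOn
  · exact ((continuous_norm.pow 2).mul ((hc.norm).pow 4)).aestronglyMeasurable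
  · refine Filter.Eventually.of_forall (fun ξ => ?_)
    rw [Real.norm_eq_abs, abs_of_nonneg (by positivity)]
    exact hpt ξ
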